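/- Let p ∈ (1/2, 1] and define β_k = k^{−p} Π_{s=2}^{k} (1 − s^{−p})^{−1} and Λ_n = Σ_{k=1}^n β_k. Then there exists ε > 0 such that for all sufficiently large n, β_n ≤ Λ_n / (log Λ_n)^{1+ε}. In particular, (β_n)_{n≥1} is an averaging scheme with ψ(x) = (log x)^{1+ε}. -/

import Mathlib

open Filter MeasureTheory Topology

/-- `Ψ_c`: the set of monotonically increasing functions `ψ : (0,∞) → (0,∞)` with
`∑_{n=1}^∞ 1/(n ψ(n)) < ∞`. -/
def PsiC (ψ : ℝ → ℝ) : Prop :=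
  (∀ x : ℝ, 0 < x → 0 < ψ x) ∧ MonotoneOn ψ (Set.Ioi (0 : ℝ)) ∧
    Summable fun n : ℕ => 1 / ((n + 1 : ℝ) * ψ (n + 1))

/-- A non-decreasing sequence `(b_n)_{n≥1}` of positive reals is an averaging scheme if
there is `ψ ∈ Ψ_c` with `b_n ≤ A_n / ψ(A_n)` for all sufficiently large `n`,
where `A_n = ∑_{k=1}^n b_k`. -/
def IsAveragingScheme (b : ℕ → ℝ) : Prop :=
  (∀ n, 1 ≤ n → 0 < b n) ∧ (∀ m n, 1 ≤ m → m ≤ n → b m ≤ b n) ∧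
    ∃ ψ : ℝ → ℝ, PsiC ψ ∧ ∀ᶠ n : ℕ in atTop,
      b n ≤ (∑ k ∈ Finset.Icc 1 n, b k) / ψ (∑ k ∈ Finset.Icc 1 n, b k)

section Aux

open Real NNReal

/-- For `s ≥ 2` and `p > 1/2`, `s^{-p} ≤ 3/4`. -/
lemma aux_le34 {p : ℝ} (hp0 : 1 / 2 < p) {s : ℕ} (hs : 2 ≤ s) : (s : ℝ) ^ (-p) ≤ 3 / 4 := by
  have h1 : (1:ℝ) ≤ (s:ℝ) := by exact_mod_cast Nat.one_le_of_lt hs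
  have h2 : (2:ℝ) ≤ (s:ℝ) := by exact_mod_cast hs
  have hhalf : (s:ℝ) ^ ((1:ℝ)/2) ≤ (s:ℝ) ^ p := Real.rpow_le_rpow_of_exponent_le h1 hp0.le
  have hsq : (4/3 : ℝ) ≤ (s:ℝ) ^ ((1:ℝ)/2) := by
    rw [← Real.sqrt_eq_rpow]
    have : (4/3 : ℝ) ≤ Real.sqrt 2 := by
      rw [show (4/3:ℝ) = Real.sqrt ((4/3)^2) by rw [Real.sqrt_sq (by norm_num)]]
      exact Real.sqrt_le_sqrt (by norm_num)
    exact this.trans (Real.sqrt_le_sqrt h2)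
  rw [Real.rpow_neg (by positivity)]
  rw [inv_le_comm₀ (by positivity) (by norm_num)]
  calc (3/4 : ℝ)⁻¹ = 4/3 := by norm_num
    _ ≤ (s:ℝ) ^ p := hsq.trans hhalf

/-- `∑_{s=1}^n s^{-1/2} ≤ 2√n`. -/
lemma aux_sqrt_sum (n : ℕ) : ∑ s ∈ Finset.Icc 1 n, (s : ℝ) ^ (-(1:ℝ)/2) ≤ 2 * Real.sqrt n := by
  induction n with
  | zero => simp
  | succ n ih =>
    rw [Finset.sum_Icc_succ_top (by omega)]
    have h1 : ((n+1:ℕ) : ℝ) ^ (-(1:ℝ)/2) = (Real.sqrt (n+1))⁻¹ := by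
      rw [show (-(1:ℝ)/2) = -(1/2) by ring, Real.rpow_neg (by positivity), Real.sqrt_eq_rpow]
      push_cast; ring_nf
    have hs1 : Real.sqrt (n+1) > 0 := Real.sqrt_pos.mpr (by positivity)
    have hsq1 : Real.sqrt (n+1) ^ 2 = (n+1:ℝ) := Real.sq_sqrt (by positivity)
    have hsqn : Real.sqrt n ^ 2 = (n:ℝ) := Real.sq_sqrt (by positivity)
    have hsn : Real.sqrt n ≥ 0 := Real.sqrt_nonneg _
    have key : (Real.sqrt (n+1))⁻¹ ≤ 2 * Real.sqrt (n+1) - 2 * Real.sqrt n := by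
      rw [inv_le_iff_one_le_mul₀ hs1]
      nlinarith [sq_nonneg (Real.sqrt (n+1) - Real.sqrt n)]
    push_cast
    push_cast at ih h1
    linarith [ih, h1 ▸ key]

/-- Subadditivity of `x ^ p` for `0 < p ≤ 1`. -/
lemma aux_subadd {p : ℝ} (hp : 0 < p) (hp1 : p ≤ 1) (k : ℕ) :
    ((k:ℝ) + 1) ^ p ≤ (k:ℝ) ^ p + 1 := by
  have h := NNReal.rpow_add_le_add_rpow (k : ℝ≥0) 1 hp.le hp1
  have h2 := NNReal.coe_le_coe.mpr h
  push_cast [NNReal.coe_rpow] at h2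
  simpa using h2

/-- `log((1-s^{-p})⁻¹) ≤ 4 s^{-1/2}` for `s ≥ 2`, `1/2 < p`. -/
lemma aux_log_factor {p : ℝ} (hp0 : 1/2 < p) {s : ℕ} (hs : 2 ≤ s) :
    Real.log ((1 - (s:ℝ) ^ (-p))⁻¹) ≤ 4 * (s:ℝ) ^ (-(1:ℝ)/2) := by
  have hx34 := aux_le34 hp0 hs
  have hxpos : 0 < (s:ℝ) ^ (-p) := Real.rpow_pos_of_pos (by positivity) _
  set x := (s:ℝ) ^ (-p) with hxdef
  have h1x : (1:ℝ)/4 ≤ 1 - x := by linarith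
  have hpos : (0:ℝ) < (1 - x)⁻¹ := by positivity
  have hlog := Real.log_le_sub_one_of_pos hpos
  have h4 : (1 - x)⁻¹ ≤ 4 := by
    rw [inv_le_comm₀ (by linarith) (by norm_num)]; linarith
  have heq : (1 - x)⁻¹ - 1 = x * (1 - x)⁻¹ := by field_simp; ring
  have hxle : x ≤ (s:ℝ) ^ (-(1:ℝ)/2) := by
    rw [hxdef]
    apply Real.rpow_le_rpow_of_exponent_le (by exact_mod_cast Nat.one_le_of_lt hs)
    linarith
  calc Real.log ((1-x)⁻¹) ≤ (1-x)⁻¹ - 1 := hlog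
    _ = x * (1-x)⁻¹ := heq
    _ ≤ x * 4 := by nlinarith
    _ ≤ 4 * (s:ℝ) ^ (-(1:ℝ)/2) := by linarith

/-- `ψ(x) = (max 1 (log x))^(1+ε)` belongs to `Ψ_c` for `ε > 0`. -/
lemma aux_psiC (ε : ℝ) (hε : 0 < ε) :
    PsiC (fun x => (max 1 (Real.log x)) ^ (1+ε)) := by
  have h1ε : (0:ℝ) < 1 + ε := by linarith
  refine ⟨?_, ?_, ?_⟩
  · intro x _
    exact Real.rpow_pos_of_pos (lt_of_lt_of_le one_pos (le_max_left _ _)) _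
  · intro x hx y hy hxy
    have : Real.log x ≤ Real.log y := Real.log_le_log hx hxy
    exact Real.rpow_le_rpow (le_trans zero_le_one (le_max_left _ _))
      (max_le_max le_rfl this) h1ε.le
  · set f : ℕ → ℝ := fun n => 1 / ((n:ℝ) * (max 1 (Real.log n)) ^ (1+ε)) with hf
    have hfnonneg : ∀ n, 0 ≤ f n := by
      intro n
      apply div_nonneg zero_le_one
      exact mul_nonneg (Nat.cast_nonneg n)
        (Real.rpow_nonneg (le_trans zero_le_one (le_max_left _ _)) _)
    have hfanti : ∀ ⦃m n : ℕ⦄, 0 < m → m ≤ n → f n ≤ f m := by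
      intro m n hm hmn
      simp only [hf]
      apply one_div_le_one_div_of_le
      · have h1 : (0:ℝ) < (m:ℝ) := by exact_mod_cast hm
        have h2 : (0:ℝ) < (max 1 (Real.log m)) ^ (1+ε) :=
          Real.rpow_pos_of_pos (lt_of_lt_of_le one_pos (le_max_left _ _)) _
        positivity
      · apply mul_le_mul (by exact_mod_cast hmn)
        · exact Real.rpow_le_rpow (le_trans zero_le_one (le_max_left _ _))
            (max_le_max le_rfl (Real.log_le_log (by exact_mod_cast hm) (by exact_mod_cast hmn)))
            h1ε.le
        · exact Real.rpow_nonneg (le_trans zero_le_one (le_max_left _ _)) _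
        · exact Nat.cast_nonneg n
    have hsum : Summable f := by
      rw [← summable_condensed_iff_of_nonneg hfnonneg hfanti]
      have heq : ∀ k : ℕ, (2:ℝ) ^ k * f (2 ^ k) = 1 / (max 1 ((k:ℝ) * Real.log 2)) ^ (1+ε) := by
        intro k
        simp only [hf]
        push_cast
        rw [Real.log_pow]
        have hne : ((2:ℝ) ^ k) ≠ 0 := by positivity
        push_cast
        field_simp
      rw [funext heq]
      apply (_root_.summable_nat_add_iff 2).mp
      have hbase : Summable (fun k : ℕ => (2:ℝ)^(1+ε) * (1 / ((k:ℝ)+2) ^ (1+ε))) := by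
        apply Summable.mul_left
        have h0 : Summable (fun n : ℕ => 1 / (n:ℝ) ^ (1+ε)) :=
          (Real.summable_one_div_nat_rpow).mpr (by linarith)
        have := (summable_nat_add_iff (f := fun n : ℕ => 1 / (n:ℝ) ^ (1+ε)) 2).mpr h0
        apply this.congr
        intro n; push_cast; ring_nf
      apply Summable.of_nonneg_of_le _ _ hbase
      · intro k; positivity
      · intro k
        push_cast
        have hc2 : (2:ℝ) ≤ (k:ℝ) + 2 := by linarith [Nat.cast_nonneg (α := ℝ) k]
        have hlog2 : (1:ℝ)/2 < Real.log 2 := by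
          have := Real.log_two_gt_d9; linarith
        have hge : ((k:ℝ)+2) / 2 ≤ max 1 (((k:ℝ)+2) * Real.log 2) := by
          apply le_trans _ (le_max_right _ _)
          have := mul_le_mul_of_nonneg_left hlog2.le (show (0:ℝ) ≤ (k:ℝ)+2 by linarith)
          linarith
        have hM : (((k:ℝ)+2)/2) ^ (1+ε) ≤ (max 1 (((k:ℝ)+2) * Real.log 2)) ^ (1+ε) :=
          Real.rpow_le_rpow (by linarith) hge h1ε.le
        have h1 : 1 / (max 1 (((k:ℝ)+2) * Real.log 2)) ^ (1+ε) ≤ 1 / (((k:ℝ)+2)/2) ^ (1+ε) :=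
          one_div_le_one_div_of_le (by positivity) hM
        calc 1 / (max 1 (((k:ℝ)+2) * Real.log 2)) ^ (1+ε) ≤ 1 / (((k:ℝ)+2)/2) ^ (1+ε) := h1
          _ = (2:ℝ)^(1+ε) * (1 / ((k:ℝ)+2) ^ (1+ε)) := by
              rw [Real.div_rpow (by linarith) (by norm_num)]
              field_simp
    have := (_root_.summable_nat_add_iff 1).mpr hsum
    apply this.congr
    intro n
    simp only [hf]
    push_cast
    ring_nf

end Aux

theorem stmt_6 (p : ℝ) (hp0 : 1 / 2 < p) (hp1 : p ≤ 1)
    (β : ℕ → ℝ)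
    (hβ : ∀ k : ℕ, β k = (k : ℝ) ^ (-p) * ∏ s ∈ Finset.Icc 2 k, (1 - (s : ℝ) ^ (-p))⁻¹)
    (Λ : ℕ → ℝ) (hΛ : ∀ n : ℕ, Λ n = ∑ k ∈ Finset.Icc 1 n, β k) :
    (∃ ε > (0 : ℝ), ∀ᶠ n : ℕ in atTop, β n ≤ Λ n / Real.log (Λ n) ^ (1 + ε)) ∧
      IsAveragingScheme β := by
  have hp : 0 < p := by linarith
  have hfac : ∀ s : ℕ, 2 ≤ s → (1:ℝ)/4 ≤ 1 - (s:ℝ) ^ (-p) := by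
    intro s hs; have := aux_le34 hp0 hs; linarith
  have hfacpos : ∀ s : ℕ, 2 ≤ s → (0:ℝ) < (1 - (s:ℝ) ^ (-p))⁻¹ := by
    intro s hs; have := hfac s hs; positivity
  have hprodpos : ∀ n : ℕ, 0 < ∏ s ∈ Finset.Icc 2 n, (1 - (s:ℝ) ^ (-p))⁻¹ := by
    intro n; exact Finset.prod_pos fun s hs => hfacpos s (Finset.mem_Icc.mp hs).1
  have hβpos : ∀ k, 1 ≤ k → 0 < β k := by
    intro k hk
    rw [hβ]
    have : (0:ℝ) < (k:ℝ) ^ (-p) := Real.rpow_pos_of_pos (by exact_mod_cast hk) _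
    exact mul_pos this (hprodpos k)
  have hβ1 : β 1 = 1 := by rw [hβ]; norm_num
  have hstep : ∀ k : ℕ, 1 ≤ k → β k ≤ β (k+1) := by
    intro k hk
    have hk1 : (1:ℝ) ≤ (k:ℝ) := by exact_mod_cast hk
    rw [hβ k, hβ (k+1), Finset.prod_Icc_succ_top (by omega)]
    push_cast
    set P := ∏ s ∈ Finset.Icc 2 k, (1 - (s:ℝ) ^ (-p))⁻¹ with hP
    have hPpos : 0 < P := hprodpos k
    have hb1 : (1:ℝ) < ((k:ℝ)+1) ^ p := by
      apply Real.one_lt_rpow_iff_of_pos (by positivity) |>.mpr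
      left; constructor <;> [linarith; exact hp]
    have hapos : (0:ℝ) < (k:ℝ) ^ p := Real.rpow_pos_of_pos (by linarith) _
    have hsub : ((k:ℝ)+1) ^ p - 1 ≤ (k:ℝ) ^ p := by
      have := aux_subadd hp hp1 k; linarith
    have hrw : ∀ x : ℝ, 0 < x → x ^ (-p) = (x ^ p)⁻¹ := fun x hx => Real.rpow_neg hx.le p
    rw [hrw _ (by linarith : (0:ℝ) < (k:ℝ)), hrw _ (by positivity : (0:ℝ) < (k:ℝ)+1)]
    have key : ((k:ℝ) ^ p)⁻¹ ≤ (((k:ℝ)+1) ^ p)⁻¹ * (1 - (((k:ℝ)+1) ^ p)⁻¹)⁻¹ := by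
      have h2 : (((k:ℝ)+1)^p)⁻¹ * (1 - (((k:ℝ)+1) ^ p)⁻¹)⁻¹ = (((k:ℝ)+1)^p - 1)⁻¹ := by
        rw [← mul_inv]
        congr 1
        field_simp
      rw [h2]
      exact inv_anti₀ (by linarith) hsub
    calc ((k:ℝ)^p)⁻¹ * P ≤ ((((k:ℝ)+1) ^ p)⁻¹ * (1 - (((k:ℝ)+1) ^ p)⁻¹)⁻¹) * P :=
          mul_le_mul_of_nonneg_right key hPpos.le
      _ = (((k:ℝ)+1) ^ p)⁻¹ * (P * (1 - (((k:ℝ)+1) ^ p)⁻¹)⁻¹) := by ring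
  have hmono : ∀ m n, 1 ≤ m → m ≤ n → β m ≤ β n := by
    intro m n hm hmn
    induction n with
    | zero => omega
    | succ n ih =>
      rcases Nat.lt_or_ge m (n+1) with h | h
      · exact (ih (by omega)).trans (hstep n (by omega))
      · have : m = n + 1 := by omega
        subst this; rfl
  have hΛP : ∀ n : ℕ, 1 ≤ n → Λ n = ∏ s ∈ Finset.Icc 2 n, (1 - (s:ℝ) ^ (-p))⁻¹ := by
    intro n hn
    induction n with
    | zero => omega
    | succ n ih =>
      rcases Nat.lt_or_ge n 1 with h | h
      · have : n = 0 := by omega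
        subst this
        rw [hΛ]; norm_num [hβ1]
      · rw [hΛ, Finset.sum_Icc_succ_top (by omega), ← hΛ, ih h,
          Finset.prod_Icc_succ_top (by omega : 2 ≤ n + 1), hβ (n+1),
          Finset.prod_Icc_succ_top (by omega : 2 ≤ n + 1)]
        push_cast
        set P := ∏ s ∈ Finset.Icc 2 n, (1 - (s:ℝ) ^ (-p))⁻¹ with hP
        have hc : (1:ℝ)/4 ≤ 1 - ((n:ℝ)+1) ^ (-p) := by
          have := hfac (n+1) (by omega); push_cast at this; exact this
        have hne : (1:ℝ) - ((n:ℝ)+1) ^ (-p) ≠ 0 := by linarith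
        field_simp
        ring
  have hΛge : ∀ n : ℕ, 1 ≤ n → (n:ℝ) ≤ Λ n := by
    intro n hn
    rw [hΛ]
    calc (n:ℝ) = ∑ _k ∈ Finset.Icc 1 n, (1:ℝ) := by
          rw [Finset.sum_const, Nat.card_Icc]; simp
      _ ≤ ∑ k ∈ Finset.Icc 1 n, β k := by
          apply Finset.sum_le_sum
          intro k hk
          have hk1 := (Finset.mem_Icc.mp hk).1
          calc (1:ℝ) = β 1 := hβ1.symm
            _ ≤ β k := hmono 1 k le_rfl hk1
  have hΛpos : ∀ n : ℕ, 1 ≤ n → 0 < Λ n := by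
    intro n hn
    have h1 : (1:ℝ) ≤ (n:ℝ) := by exact_mod_cast hn
    linarith [hΛge n hn]
  have hlog : ∀ n : ℕ, 1 ≤ n → Real.log (Λ n) ≤ 8 * Real.sqrt n := by
    intro n hn
    rw [hΛP n hn, Real.log_prod (fun s hs => by
      have := hfac s (Finset.mem_Icc.mp hs).1
      positivity)]
    calc ∑ s ∈ Finset.Icc 2 n, Real.log ((1 - (s:ℝ) ^ (-p))⁻¹)
        ≤ ∑ s ∈ Finset.Icc 2 n, 4 * (s:ℝ) ^ (-(1:ℝ)/2) := by
          exact Finset.sum_le_sum fun s hs => aux_log_factor hp0 (Finset.mem_Icc.mp hs).1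
      _ ≤ ∑ s ∈ Finset.Icc 1 n, 4 * (s:ℝ) ^ (-(1:ℝ)/2) := by
          apply Finset.sum_le_sum_of_subset_of_nonneg
          · intro s hs
            simp only [Finset.mem_Icc] at *
            omega
          · intro s _ _; positivity
      _ = 4 * ∑ s ∈ Finset.Icc 1 n, (s:ℝ) ^ (-(1:ℝ)/2) := by rw [Finset.mul_sum]
      _ ≤ 4 * (2 * Real.sqrt n) := by
          have := aux_sqrt_sum n; linarith
      _ = 8 * Real.sqrt n := by ring
  set ε : ℝ := p - 1/2 with hεdef
  have hε : 0 < ε := by simp only [hεdef]; linarith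
  set δ : ℝ := p / 2 - 1/4 with hδdef
  have hδ : 0 < δ := by simp only [hδdef]; linarith
  have key : ∀ᶠ n : ℕ in atTop, Real.log (Λ n) ^ (1+ε) ≤ (n:ℝ) ^ p := by
    have h8 : Tendsto (fun n : ℕ => (n:ℝ) ^ δ) atTop atTop :=
      (tendsto_rpow_atTop hδ).comp tendsto_natCast_atTop_atTop
    filter_upwards [h8.eventually_ge_atTop ((8:ℝ) ^ (1+ε)), eventually_ge_atTop 1] with n h8n hn1
    have hn0 : (0:ℝ) < (n:ℝ) := by exact_mod_cast hn1
    have hlogn : 0 ≤ Real.log (Λ n) := by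
      apply Real.log_nonneg
      calc (1:ℝ) ≤ (n:ℝ) := by exact_mod_cast hn1
        _ ≤ Λ n := hΛge n hn1
    calc Real.log (Λ n) ^ (1+ε) ≤ (8 * Real.sqrt n) ^ (1+ε) := by
          apply Real.rpow_le_rpow hlogn (hlog n hn1) (by linarith)
      _ = 8 ^ (1+ε) * ((n:ℝ) ^ ((1:ℝ)/2)) ^ (1+ε) := by
          rw [Real.mul_rpow (by norm_num) (Real.sqrt_nonneg _), Real.sqrt_eq_rpow]
      _ = 8 ^ (1+ε) * (n:ℝ) ^ ((1:ℝ)/2 * (1+ε)) := by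
          rw [← Real.rpow_mul hn0.le]
      _ ≤ (n:ℝ) ^ δ * (n:ℝ) ^ ((1:ℝ)/2 * (1+ε)) := by
          apply mul_le_mul_of_nonneg_right h8n (by positivity)
      _ = (n:ℝ) ^ (δ + (1:ℝ)/2 * (1+ε)) := by rw [← Real.rpow_add hn0]
      _ = (n:ℝ) ^ p := by
          congr 1
          simp only [hδdef, hεdef]; ring
  -- `log Λ_n ≥ 1` eventually
  have hlog1 : ∀ᶠ n : ℕ in atTop, 1 ≤ Real.log (Λ n) := by
    filter_upwards [eventually_ge_atTop 3] with n hn3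
    have hn1 : 1 ≤ n := by omega
    rw [Real.le_log_iff_exp_le (hΛpos n hn1)]
    calc Real.exp 1 ≤ 2.7182818286 := Real.exp_one_lt_d9.le
      _ ≤ (n:ℝ) := by
          have : (3:ℝ) ≤ (n:ℝ) := by exact_mod_cast hn3
          linarith
      _ ≤ Λ n := hΛge n hn1
  have main : ∀ᶠ n : ℕ in atTop, β n ≤ Λ n / Real.log (Λ n) ^ (1 + ε) := by
    filter_upwards [key, hlog1, eventually_ge_atTop 1] with n hkey hl1 hn1
    have hn0 : (0:ℝ) < (n:ℝ) := by exact_mod_cast hn1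
    have hβn : β n = (n:ℝ) ^ (-p) * Λ n := by rw [hβ, hΛP n hn1]
    have hLpos : (0:ℝ) < Real.log (Λ n) ^ (1+ε) :=
      Real.rpow_pos_of_pos (by linarith) _
    have hnp : (0:ℝ) < (n:ℝ) ^ p := Real.rpow_pos_of_pos hn0 _
    rw [hβn, div_eq_mul_inv, Real.rpow_neg hn0.le]
    calc ((n:ℝ) ^ p)⁻¹ * Λ n = Λ n * ((n:ℝ) ^ p)⁻¹ := by ring
      _ ≤ Λ n * (Real.log (Λ n) ^ (1+ε))⁻¹ := by
          apply mul_le_mul_of_nonneg_left (inv_anti₀ hLpos hkey) (hΛpos n hn1).le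
  refine ⟨⟨ε, hε, main⟩, hβpos, hmono, ?_⟩
  refine ⟨fun x => (max 1 (Real.log x)) ^ (1+ε), aux_psiC ε hε, ?_⟩
  filter_upwards [main, hlog1] with n hmain hl1
  rw [← hΛ, max_eq_right hl1]
  exact hmain
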